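/- Let 𝔥' ⊆ 𝔥 be a subset of a locally finite hyperplane arrangement, and let d'(x,y) count hyperplanes in 𝔥' separating x and y while d(x,y) counts hyperplanes in 𝔥 separating x and y. If x, y, z lie in the complement of ⋃𝔥 and d(x,y) + d(y,z) = d(x,z), then d'(x,y) + d'(y,z) = d'(x,z). -/
import Mathlib


private lemma sign_xor {a b c : ℝ} (ha : a ≠ 0) (hb : b ≠ 0) (hc : c ≠ 0) :
    a * c < 0 ↔ ((a * b < 0) ∧ ¬(b * c < 0)) ∨ (¬(a * b < 0) ∧ (b * c < 0)) := by
  rcases ha.lt_or_gt with ha | ha <;> rcases hb.lt_or_gt with hb | hb <;>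
    rcases hc.lt_or_gt with hc | hc <;>
    constructor <;>
    (intro h; try rcases h with ⟨h1, h2⟩ | ⟨h1, h2⟩) <;>
    first
      | nlinarith
      | (left; constructor <;> nlinarith)
      | (right; constructor <;> nlinarith)

private lemma sep_finite {n : ℕ} (𝔥 : Set (EuclideanSpace ℝ (Fin n) →ᵃ[ℝ] ℝ))
    (hlf : ∀ a : EuclideanSpace ℝ (Fin n), ∃ U ∈ nhds a,
      {f ∈ 𝔥 | ∃ y ∈ U, f y = 0}.Finite)
    (x y : EuclideanSpace ℝ (Fin n)) :
    {f ∈ 𝔥 | f x * f y < 0}.Finite := by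
  choose U hU hUfin using hlf
  set L : ℝ →ᵃ[ℝ] EuclideanSpace ℝ (Fin n) := AffineMap.lineMap x y with hL
  have hLc : Continuous L := L.continuous_of_finiteDimensional
  have hseg : IsCompact (L '' Set.Icc 0 1) := isCompact_Icc.image hLc
  obtain ⟨t, hts, hcov⟩ := hseg.elim_nhds_subcover U (fun a _ => hU a)
  apply (t.finite_toSet.biUnion fun a _ => hUfin a).subset
  rintro f ⟨hf, hfxy⟩
  have hcont : Continuous (fun s : ℝ => f (L s)) :=
    (f.continuous_of_finiteDimensional).comp hLc
  have h0 : f (L 0) = f x := by simp [hL]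
  have h1 : f (L 1) = f y := by simp [hL]
  have : ∃ s ∈ Set.Icc (0:ℝ) 1, f (L s) = 0 := by
    rcases lt_or_gt_of_ne (fun h : f x = 0 => by simp [h] at hfxy) with hx0 | hx0
    · have hy0 : 0 < f y := by nlinarith
      obtain ⟨s, hs, hs0⟩ := intermediate_value_Icc (by norm_num : (0:ℝ) ≤ 1)
        hcont.continuousOn (by rw [h0, h1]; exact ⟨hx0.le, hy0.le⟩)
      exact ⟨s, hs, hs0⟩
    · have hy0 : f y < 0 := by nlinarith
      obtain ⟨s, hs, hs0⟩ := intermediate_value_Icc' (by norm_num : (0:ℝ) ≤ 1)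
        hcont.continuousOn (by rw [h0, h1]; exact ⟨hy0.le, hx0.le⟩)
      exact ⟨s, hs, hs0⟩
  obtain ⟨s, hs, hs0⟩ := this
  obtain ⟨a, hat, hpa⟩ := Set.mem_iUnion₂.1 (hcov (Set.mem_image_of_mem L hs))
  exact Set.mem_biUnion hat ⟨hf, L s, hpa, hs0⟩

/-- If `𝔥' ⊆ 𝔥` is a subset of a locally finite hyperplane arrangement and
`d` (resp. `d'`) counts the hyperplanes of `𝔥` (resp. `𝔥'`) separating two points,
then additivity `d(x,y) + d(y,z) = d(x,z)` implies `d'(x,y) + d'(y,z) = d'(x,z)`. -/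
theorem stmt_2 (n : ℕ)
    (𝔥 𝔥' : Set (EuclideanSpace ℝ (Fin n) →ᵃ[ℝ] ℝ)) (hsub : 𝔥' ⊆ 𝔥)
    (hlf : ∀ a : EuclideanSpace ℝ (Fin n), ∃ U ∈ nhds a,
      {f ∈ 𝔥 | ∃ y ∈ U, f y = 0}.Finite)
    (x y z : EuclideanSpace ℝ (Fin n))
    (hx : ∀ f ∈ 𝔥, f x ≠ 0) (hy : ∀ f ∈ 𝔥, f y ≠ 0) (hz : ∀ f ∈ 𝔥, f z ≠ 0)
    (hadd : {f ∈ 𝔥 | f x * f y < 0}.ncard + {f ∈ 𝔥 | f y * f z < 0}.ncard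
      = {f ∈ 𝔥 | f x * f z < 0}.ncard) :
    {f ∈ 𝔥' | f x * f y < 0}.ncard + {f ∈ 𝔥' | f y * f z < 0}.ncard
      = {f ∈ 𝔥' | f x * f z < 0}.ncard := by
  set A := {f ∈ 𝔥 | f x * f y < 0} with hA
  set B := {f ∈ 𝔥 | f y * f z < 0} with hB
  set C := {f ∈ 𝔥 | f x * f z < 0} with hC
  have hAfin : A.Finite := sep_finite 𝔥 hlf x y
  have hBfin : B.Finite := sep_finite 𝔥 hlf y z
  have hCeq : C = (A ∪ B) \ (A ∩ B) := by
    ext f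
    simp only [hA, hB, hC, Set.mem_setOf_eq, Set.mem_diff, Set.mem_union, Set.mem_inter_iff]
    constructor
    · rintro ⟨hf, hfc⟩
      rcases (sign_xor (hx f hf) (hy f hf) (hz f hf)).1 hfc with ⟨h1, h2⟩ | ⟨h1, h2⟩
      · exact ⟨Or.inl ⟨hf, h1⟩, fun ⟨_, hb⟩ => h2 hb.2⟩
      · exact ⟨Or.inr ⟨hf, h2⟩, fun ⟨ha, _⟩ => h1 ha.2⟩
    · rintro ⟨h1, h2⟩
      have hf : f ∈ 𝔥 := by rcases h1 with ⟨hf, _⟩ | ⟨hf, _⟩ <;> exact hf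
      refine ⟨hf, (sign_xor (hx f hf) (hy f hf) (hz f hf)).2 ?_⟩
      rcases h1 with ⟨_, ha⟩ | ⟨_, hb⟩
      · exact Or.inl ⟨ha, fun hb => h2 ⟨⟨hf, ha⟩, ⟨hf, hb⟩⟩⟩
      · exact Or.inr ⟨fun ha => h2 ⟨⟨hf, ha⟩, ⟨hf, hb⟩⟩, hb⟩
  -- derive that A ∩ B = ∅
  have hABempty : A ∩ B = ∅ := by
    have hUfin : (A ∪ B).Finite := hAfin.union hBfin
    have h1 : A.ncard + B.ncard = (A ∪ B).ncard + (A ∩ B).ncard :=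
      (Set.ncard_union_add_ncard_inter A B hAfin hBfin).symm
    have h2 : C.ncard = (A ∪ B).ncard - (A ∩ B).ncard := by
      rw [hCeq, Set.ncard_diff (Set.inter_subset_left.trans Set.subset_union_left) (hAfin.inter_of_left B)]
    have h3 : (A ∩ B).ncard ≤ (A ∪ B).ncard :=
      Set.ncard_le_ncard (Set.inter_subset_left.trans Set.subset_union_left) hUfin
    have h0 : (A ∩ B).ncard = 0 := by rw [h1, h2] at hadd; omega
    exact (Set.ncard_eq_zero (hAfin.inter_of_left B)).1 h0
  set A' := {f ∈ 𝔥' | f x * f y < 0} with hA'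
  set B' := {f ∈ 𝔥' | f y * f z < 0} with hB'
  have hA's : A' ⊆ A := fun f ⟨hf, h⟩ => ⟨hsub hf, h⟩
  have hB's : B' ⊆ B := fun f ⟨hf, h⟩ => ⟨hsub hf, h⟩
  have hdisj : Disjoint A' B' := by
    rw [Set.disjoint_iff_inter_eq_empty]
    rw [← Set.subset_empty_iff, ← hABempty]
    exact Set.inter_subset_inter hA's hB's
  have hC'eq : {f ∈ 𝔥' | f x * f z < 0} = A' ∪ B' := by
    ext f
    simp only [hA', hB', Set.mem_setOf_eq, Set.mem_union]
    constructor
    · rintro ⟨hf, hfc⟩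
      rcases (sign_xor (hx f (hsub hf)) (hy f (hsub hf)) (hz f (hsub hf))).1 hfc with
        ⟨h1, _⟩ | ⟨_, h2⟩
      · exact Or.inl ⟨hf, h1⟩
      · exact Or.inr ⟨hf, h2⟩
    · rintro (⟨hf, h1⟩ | ⟨hf, h1⟩) <;>
        refine ⟨hf, (sign_xor (hx f (hsub hf)) (hy f (hsub hf)) (hz f (hsub hf))).2 ?_⟩
      · refine Or.inl ⟨h1, fun hb => ?_⟩
        have : f ∈ A ∩ B := ⟨⟨hsub hf, h1⟩, ⟨hsub hf, hb⟩⟩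
        simp [hABempty] at this
      · refine Or.inr ⟨fun ha => ?_, h1⟩
        have : f ∈ A ∩ B := ⟨⟨hsub hf, ha⟩, ⟨hsub hf, h1⟩⟩
        simp [hABempty] at this
  rw [hC'eq, Set.ncard_union_eq hdisj (hAfin.subset hA's) (hBfin.subset hB's)]
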